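/- Let (Ω, Σ, μ) be a finite measure space, X a Banach space, f ∈ L̄₁(Ω, Σ, μ, X) with integrable majorant g ∈ L₁(Ω, Σ, μ). Let Π = {Δ_i} be a partition of Ω for which the upper integral sum of g is absolutely convergent, i.e. Σ_i (sup_{t ∈ Δ_i} g(t)) · μ(Δ_i) < ∞. Then for any finer partition Γ ≻ Π, the set {S(f, Γ, T) : T any choice of sampling points for Γ} is contained in the closed convex hull of {S(f, Π, T) : T any choice of sampling points for Π}. -/

import Mathlib

open MeasureTheory Set Pointwise

/-- A countable partition of `A` into pairwise disjoint measurable pieces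
(possibly empty, so that finite partitions are included). -/
def IsRLPartition {Ω : Type*} [MeasurableSpace Ω] (A : Set Ω) (P : ℕ → Set Ω) : Prop :=
  (∀ i, MeasurableSet (P i)) ∧ Pairwise (Function.onFun Disjoint P) ∧ (⋃ i, P i) = A

/-- `Γ` is finer than (inscribed into) `P`: every piece of `Γ` is contained in a piece of `P`. -/
def IsFinerPartition {Ω : Type*} (Γ P : ℕ → Set Ω) : Prop :=
  ∀ j, ∃ i, Γ j ⊆ P i

/-- `T` is a choice of sampling points for the partition `P`. -/
def IsSampling {Ω : Type*} (P : ℕ → Set Ω) (T : ℕ → Ω) : Prop :=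
  ∀ i, (P i).Nonempty → T i ∈ P i

/-- The RL integral sum `S(f, P, T) = ∑ᵢ μ(Pᵢ) • f(Tᵢ)`. -/
noncomputable def RLSum {Ω X : Type*} [MeasurableSpace Ω] [NormedAddCommGroup X]
    [NormedSpace ℝ X] (μ : Measure Ω) (f : Ω → X) (P : ℕ → Set Ω) (T : ℕ → Ω) : X :=
  ∑' i, (μ (P i)).toReal • f (T i)

/-- Absolute convergence of the RL integral sum. -/
def RLSumAbsConv {Ω X : Type*} [MeasurableSpace Ω] [NormedAddCommGroup X]
    (μ : Measure Ω) (f : Ω → X) (P : ℕ → Set Ω) (T : ℕ → Ω) : Prop :=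
  Summable fun i => (μ (P i)).toReal * ‖f (T i)‖

/-- `f` is RL-integrable over `A` with RL integral `x`. -/
def HasRLIntegral {Ω X : Type*} [MeasurableSpace Ω] [NormedAddCommGroup X] [NormedSpace ℝ X]
    (μ : Measure Ω) (f : Ω → X) (A : Set Ω) (x : X) : Prop :=
  ∀ ε > 0, ∃ P : ℕ → Set Ω, IsRLPartition A P ∧
    ∀ Γ : ℕ → Set Ω, IsRLPartition A Γ → IsFinerPartition Γ P →
      ∀ T : ℕ → Ω, IsSampling Γ T →
        RLSumAbsConv μ f Γ T ∧ ‖RLSum μ f Γ T - x‖ < ε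

/-- `f` has a Lebesgue-integrable majorant, i.e. `f ∈ L̄₁(Ω, Σ, μ, X)`. -/
def HasIntegrableMajorant {Ω X : Type*} [MeasurableSpace Ω] [NormedAddCommGroup X]
    (μ : Measure Ω) (f : Ω → X) : Prop :=
  ∃ g : Ω → ℝ, Integrable g μ ∧ ∀ t, ‖f t‖ ≤ g t

/-- The limit set `I(f)`: all limit points of the net of absolute RL integral sums. -/
def RLLimitSet {Ω X : Type*} [MeasurableSpace Ω] [NormedAddCommGroup X] [NormedSpace ℝ X]
    (μ : Measure Ω) (f : Ω → X) : Set X :=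
  {x | ∀ ε > 0, ∀ P : ℕ → Set Ω, IsRLPartition Set.univ P →
    ∃ Γ : ℕ → Set Ω, IsRLPartition Set.univ Γ ∧ IsFinerPartition Γ P ∧
      ∃ T : ℕ → Ω, IsSampling Γ T ∧ RLSumAbsConv μ f Γ T ∧ ‖RLSum μ f Γ T - x‖ < ε}

/-- `g` is a Bochner-integrable equivalent of `f`: `g` is Bochner integrable and the
RL integral of `f` over every measurable set equals the Bochner integral of `g` over it. -/
def BochnerEquivalent {Ω X : Type*} [MeasurableSpace Ω] [NormedAddCommGroup X] [NormedSpace ℝ X]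
    (μ : Measure Ω) (f g : Ω → X) : Prop :=
  Integrable g μ ∧ ∀ A : Set Ω, MeasurableSet A → HasRLIntegral μ f A (∫ ω in A, g ω ∂μ)

/-- `f : [0,1] → X` is Riemann integrable with Riemann integral `x`. -/
def HasRiemannIntegral {X : Type*} [NormedAddCommGroup X] [NormedSpace ℝ X]
    (f : ℝ → X) (x : X) : Prop :=
  ∀ ε > 0, ∃ δ > 0, ∀ (n : ℕ) (a : ℕ → ℝ) (t : ℕ → ℝ),
    a 0 = 0 → a n = 1 → (∀ i < n, a i ≤ a (i + 1)) →
    (∀ i < n, a (i + 1) - a i < δ) →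
    (∀ i < n, t i ∈ Set.Icc (a i) (a (i + 1))) →
    ‖(∑ i ∈ Finset.range n, (a (i + 1) - a i) • f (t i)) - x‖ < ε

/-- Let `f ∈ L̄₁` with integrable majorant `g`, and let `P` be a partition of `Ω`
for which the upper integral sum of `g` converges absolutely (expressed via termwise upper
bounds `M i ≥ sup_{t ∈ P i} g t` with `∑ M i · μ(P i)` convergent). Then for any finer
partition `Γ ≻ P`, every RL integral sum of `f` over `Γ` lies in the closed convex hull of
the set of RL integral sums of `f` over `P`. -/
theorem finer_sums_subset_closure_convexHull
    {Ω X : Type*} [MeasurableSpace Ω] [NormedAddCommGroup X] [NormedSpace ℝ X] [CompleteSpace X]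
    (μ : Measure Ω) [IsFiniteMeasure μ] (f : Ω → X) (g : Ω → ℝ)
    (hg : Integrable g μ) (hmaj : ∀ t, ‖f t‖ ≤ g t)
    (P : ℕ → Set Ω) (hP : IsRLPartition Set.univ P)
    (hupper : ∃ M : ℕ → ℝ, (∀ i, ∀ t ∈ P i, g t ≤ M i) ∧
      Summable fun i => M i * (μ (P i)).toReal)
    (Γ : ℕ → Set Ω) (hΓ : IsRLPartition Set.univ Γ) (hfiner : IsFinerPartition Γ P) :
    {x : X | ∃ T : ℕ → Ω, IsSampling Γ T ∧ x = RLSum μ f Γ T} ⊆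
      closure (convexHull ℝ {x : X | ∃ T : ℕ → Ω, IsSampling P T ∧ x = RLSum μ f P T}) := by
  classical
  obtain ⟨hΓm, hΓd, hΓu⟩ := hΓ
  obtain ⟨hPm, hPd, hPu⟩ := hP
  obtain ⟨M₀, hM₀, hMsum₀⟩ := hupper
  -- Replace M by max M 0
  set M : ℕ → ℝ := fun i => max (M₀ i) 0 with hMdef
  have hMnn : ∀ i, 0 ≤ M i := fun i => le_max_right _ _
  have hMub : ∀ i, ∀ t ∈ P i, g t ≤ M i := fun i t ht => (hM₀ i t ht).trans (le_max_left _ _)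
  have hMsum : Summable fun i => M i * (μ (P i)).toReal := by
    have heq : (fun i => M i * (μ (P i)).toReal) = fun i => M₀ i * (μ (P i)).toReal := by
      funext i
      rcases Set.eq_empty_or_nonempty (P i) with h | ⟨t, ht⟩
      · simp [h]
      · have h0 : 0 ≤ M₀ i := ((norm_nonneg (f t)).trans (hmaj t)).trans (hM₀ i t ht)
        simp [hMdef, max_eq_left h0]
    rw [heq]; exact hMsum₀
  rintro x ⟨T, hT, hxeq⟩
  have : Nonempty Ω := ⟨T 0⟩
  set c : ℕ → ℕ := fun j => (hfiner j).choose with hcdef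
  have hc : ∀ j, Γ j ⊆ P (c j) := fun j => (hfiner j).choose_spec
  set w : ℕ → ℝ := fun j => (μ (Γ j)).toReal with hwdef
  set a : ℕ → ℝ := fun i => (μ (P i)).toReal with hadef
  have hwnn : ∀ j, 0 ≤ w j := fun j => ENNReal.toReal_nonneg
  have hann : ∀ i, 0 ≤ a i := fun i => ENNReal.toReal_nonneg
  have hne : ∀ j, w j ≠ 0 → (Γ j).Nonempty := by
    intro j hw
    rcases Set.eq_empty_or_nonempty (Γ j) with h | h
    · exact absurd (by simp [hwdef, h]) hw
    · exact h
  -- every Γ-piece with positive measure is inside its P-piece and contains its sample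
  have hTP : ∀ j, w j ≠ 0 → T j ∈ P (c j) := fun j hw => hc j (hT j (hne j hw))
  -- fibers: c⁻¹ {i} decomposes P i
  have hPfib : ∀ i, P i = ⋃ j : c ⁻¹' {i}, Γ (j : ℕ) := by
    intro i
    ext ω
    constructor
    · intro hω
      have : ω ∈ ⋃ j, Γ j := by rw [hΓu]; trivial
      obtain ⟨j, hj⟩ := Set.mem_iUnion.1 this
      have hωP : ω ∈ P (c j) := hc j hj
      have hci : c j = i := by
        by_contra hne'
        exact (hPd hne').le_bot ⟨hωP, hω⟩
      exact Set.mem_iUnion.2 ⟨⟨j, hci⟩, hj⟩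
    · intro hω
      obtain ⟨⟨j, hj⟩, hωj⟩ := Set.mem_iUnion.1 hω
      exact hj ▸ hc j hωj
  have hμfib : ∀ i, μ (P i) = ∑' j : c ⁻¹' {i}, μ (Γ (j : ℕ)) := by
    intro i
    rw [hPfib i]
    exact measure_iUnion
      (fun j k hjk => hΓd (fun h => hjk (Subtype.ext h)))
      (fun j => hΓm _)
  have hwfib_summable : ∀ i, Summable fun j : c ⁻¹' {i} => w (j : ℕ) := by
    intro i
    apply ENNReal.summable_toReal
    rw [← hμfib i]
    exact measure_ne_top μ _
  have hwfib_sum : ∀ i, ∑' j : c ⁻¹' {i}, w (j : ℕ) = a i := by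
    intro i
    show _ = (μ (P i)).toReal
    rw [hμfib i, ENNReal.tsum_toReal_eq (fun j => measure_ne_top μ _)]
  -- summability of the majorant series over Γ
  have hfib_le : ∀ (s : Finset ℕ) (i : ℕ), (∑ j ∈ s.filter (fun j => c j = i), w j) ≤ a i := by
    intro s i
    have hd : (↑(s.filter (fun j => c j = i)) : Set ℕ).PairwiseDisjoint Γ :=
      fun j _ k _ hjk => hΓd hjk
    have h1 : (∑ j ∈ s.filter (fun j => c j = i), μ (Γ j)) ≤ μ (P i) := by
      rw [← measure_biUnion_finset hd (fun j _ => hΓm j)]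
      apply measure_mono
      apply Set.iUnion₂_subset
      intro j hj
      have := (Finset.mem_filter.1 hj).2
      exact this ▸ hc j
    calc (∑ j ∈ s.filter (fun j => c j = i), w j)
        = (∑ j ∈ s.filter (fun j => c j = i), μ (Γ j)).toReal := by
          rw [ENNReal.toReal_sum (fun j _ => measure_ne_top μ _)]
      _ ≤ a i := ENNReal.toReal_mono (measure_ne_top μ _) h1
  have hsummaj : Summable fun j => w j * M (c j) := by
    apply summable_of_sum_le (fun j => mul_nonneg (hwnn j) (hMnn _))
    intro s
    calc (∑ j ∈ s, w j * M (c j))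
        = ∑ i ∈ s.image c, ∑ j ∈ s.filter (fun j => c j = i), w j * M (c j) :=
          (Finset.sum_fiberwise_of_maps_to (fun j hj => Finset.mem_image_of_mem c hj) _).symm
      _ ≤ ∑ i ∈ s.image c, M i * a i := by
          apply Finset.sum_le_sum
          intro i _
          have : (∑ j ∈ s.filter (fun j => c j = i), w j * M (c j))
              = (∑ j ∈ s.filter (fun j => c j = i), w j) * M i := by
            rw [Finset.sum_mul]
            apply Finset.sum_congr rfl
            intro j hj
            rw [(Finset.mem_filter.1 hj).2]
          rw [this, mul_comm]
          exact mul_le_mul_of_nonneg_left (hfib_le s i) (hMnn i)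
      _ ≤ ∑' i, M i * a i :=
          Summable.sum_le_tsum _ (fun i _ => mul_nonneg (hMnn i) (hann i)) hMsum
  have hbound : ∀ j, w j * ‖f (T j)‖ ≤ w j * M (c j) := by
    intro j
    rcases eq_or_ne (w j) 0 with h | h
    · simp [h]
    · exact mul_le_mul_of_nonneg_left
        ((hmaj (T j)).trans (hMub (c j) (T j) (hTP j h))) (hwnn j)
  have hsumnorm : Summable fun j => w j * ‖f (T j)‖ :=
    Summable.of_nonneg_of_le (fun j => mul_nonneg (hwnn j) (norm_nonneg _)) hbound hsummaj
  have hsumx : Summable fun j => w j • f (T j) := by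
    apply Summable.of_norm
    simpa [norm_smul, abs_of_nonneg (hwnn _)] using hsumnorm
  -- separation argument
  by_contra hnot
  obtain ⟨φ, u, hxu, hS⟩ := geometric_hahn_banach_point_closed
    ((convex_convexHull ℝ _).closure) isClosed_closure hnot
  set v : ℕ → ℝ := fun j => φ (f (T j)) with hvdef
  have hφx : φ x = ∑' j, w j * v j := by
    rw [hxeq, RLSum, φ.map_tsum hsumx]
    exact tsum_congr (fun j => by rw [φ.map_smul]; rfl)
  have hsumwv : Summable fun j => w j * v j := by
    apply Summable.of_abs
    apply Summable.of_nonneg_of_le (fun j => abs_nonneg _)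
      (f := fun j => ‖φ‖ * (w j * M (c j)))
    · intro j
      rw [abs_mul, abs_of_nonneg (hwnn j)]
      calc w j * |v j| ≤ w j * (‖φ‖ * ‖f (T j)‖) :=
            mul_le_mul_of_nonneg_left (φ.le_opNorm _) (hwnn j)
        _ = ‖φ‖ * (w j * ‖f (T j)‖) := by ring
        _ ≤ ‖φ‖ * (w j * M (c j)) :=
            mul_le_mul_of_nonneg_left (hbound j) (norm_nonneg _)
    · exact hsummaj.mul_left _
  set s : ℕ → ℝ := fun i => ∑' j : c ⁻¹' {i}, w (j : ℕ) * v (j : ℕ) with hsdef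
  have hsfib : HasSum s (φ x) := by
    rw [hφx]
    exact hsumwv.hasSum.tsum_fiberwise c
  have hsumwv_fib : ∀ i, Summable fun j : c ⁻¹' {i} => w (j : ℕ) * v (j : ℕ) :=
    fun i => hsumwv.subtype _
  -- choose sampling points for P with below-average φ-values
  have hpick : ∀ i, ∃ t : Ω, ((P i).Nonempty → t ∈ P i) ∧ a i * φ (f t) ≤ s i := by
    intro i
    rcases eq_or_ne (a i) 0 with hai | hai
    · have hw0 : ∀ j : c ⁻¹' {i}, w (j : ℕ) = 0 := by
        intro ⟨j, hj⟩
        have hμ0 : μ (P i) = 0 := by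
          have := measure_ne_top μ (P i)
          simpa [hadef, ENNReal.toReal_eq_zero_iff, this] using hai
        have : μ (Γ j) ≤ μ (P i) := measure_mono (hj ▸ hc j)
        simp [hwdef, le_antisymm (hμ0 ▸ this) zero_le]
      have hs0 : s i = 0 := by
        rw [hsdef]
        simp only
        rw [tsum_congr (fun j => by rw [hw0 j, zero_mul]), tsum_zero]
      rcases Set.eq_empty_or_nonempty (P i) with hPe | ⟨t, ht⟩
      · exact ⟨Classical.arbitrary Ω, fun h => absurd hPe h.ne_empty, by
          rw [hai, hs0]; simp⟩
      · exact ⟨t, fun _ => ht, by rw [hai, hs0]; simp⟩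
    · have hapos : 0 < a i := lt_of_le_of_ne (hann i) (Ne.symm hai)
      -- find a fiber index with positive weight and below-average value
      by_contra hcon
      push_neg at hcon
      have hall : ∀ j : c ⁻¹' {i}, w (j : ℕ) ≠ 0 → s i / a i < v (j : ℕ) := by
        intro ⟨j, hj⟩ hwj
        have hmem : T j ∈ P i := hj ▸ hTP j hwj
        have := hcon (T j) (fun _ => hmem)
        have hlt : s i < a i * v j := this
        rw [div_lt_iff₀ hapos, mul_comm]
        exact hlt
      -- exists j in fiber with positive weight
      have hex : ∃ j : c ⁻¹' {i}, w (j : ℕ) ≠ 0 := by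
        by_contra hallz
        push_neg at hallz
        have : a i = 0 := by
          rw [← hwfib_sum i, tsum_congr (fun j => hallz j), tsum_zero]
        exact hai this
      obtain ⟨j₀, hj₀⟩ := hex
      have hle : ∀ j : c ⁻¹' {i}, w (j : ℕ) * (s i / a i) ≤ w (j : ℕ) * v (j : ℕ) := by
        intro j
        rcases eq_or_ne (w (j : ℕ)) 0 with h | h
        · simp [h]
        · exact mul_le_mul_of_nonneg_left (hall j h).le (hwnn _)
      have hstrict : w (j₀ : ℕ) * (s i / a i) < w (j₀ : ℕ) * v (j₀ : ℕ) :=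
        mul_lt_mul_of_pos_left (hall j₀ hj₀) (lt_of_le_of_ne (hwnn _) (Ne.symm hj₀))
      have hlt2 : (∑' j : c ⁻¹' {i}, w (j : ℕ) * (s i / a i))
          < ∑' j : c ⁻¹' {i}, w (j : ℕ) * v (j : ℕ) :=
        Summable.tsum_lt_tsum hle hstrict ((hwfib_summable i).mul_right _) (hsumwv_fib i)
      rw [tsum_mul_right, hwfib_sum i, mul_div_cancel₀ _ hai] at hlt2
      exact lt_irrefl _ (lt_of_lt_of_le hlt2 (le_of_eq rfl))
  choose T' hT'mem hT'le using hpick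
  have hT'samp : IsSampling P T' := fun i h => hT'mem i h
  -- the P-sum with T' is summable and its φ-value is ≤ φ x
  have hboundP : ∀ i, ‖a i • f (T' i)‖ ≤ M i * a i := by
    intro i
    rcases Set.eq_empty_or_nonempty (P i) with h | h
    · have : μ (P i) = 0 := by simp [h]
      simp [hadef, this]
    · rw [norm_smul, Real.norm_eq_abs, abs_of_nonneg (hann i), mul_comm]
      exact mul_le_mul_of_nonneg_right
        ((hmaj _).trans (hMub i _ (hT'mem i h))) (hann i)
  have hsumP : Summable fun i => a i • f (T' i) :=
    Summable.of_norm (Summable.of_nonneg_of_le (fun i => norm_nonneg _) hboundP hMsum)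
  have hyS : RLSum μ f P T' ∈ {x : X | ∃ T : ℕ → Ω, IsSampling P T ∧ x = RLSum μ f P T} :=
    ⟨T', hT'samp, rfl⟩
  have hφy : φ (RLSum μ f P T') = ∑' i, a i * φ (f (T' i)) := by
    rw [RLSum, φ.map_tsum hsumP]
    exact tsum_congr (fun i => by rw [φ.map_smul]; rfl)
  have hsumφP : Summable fun i => a i * φ (f (T' i)) := by
    have := hsumP.map φ.toLinearMap.toAddMonoidHom φ.continuous
    refine this.congr fun i => ?_
    simp [Function.comp]
  have hley : φ (RLSum μ f P T') ≤ φ x := by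
    rw [hφy, ← hsfib.tsum_eq]
    exact Summable.tsum_le_tsum (fun i => hT'le i) hsumφP hsfib.summable
  have := hS _ (subset_closure (subset_convexHull ℝ _ hyS))
  linarith
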